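/- arXiv:2310.16910 — 6 statements merged into one kernel-verified Lean document; each statement's English description precedes it below -/
import Mathlib

section
/- Let U ⊆ ℝ^m be unbounded, let F : U → ℝ^m be p-quasi sharp over U relative to a nonempty compact solution set U* with p > 2 and modulus μ > 0 (i.e., ⟨F(u), u - u*⟩ ≥ μ·dist(u, U*)^p for all u ∈ U, u* ∈ U*). Then F does not have linear growth on U, i.e., there do not exist constants C, D ≥ 0 with ‖F(u)‖ ≤ C‖u‖ + D for all u ∈ U. -/
/-- A `p`-quasi sharp operator with `p > 2` over an unbounded set, relative to a nonempty
compact solution set, cannot have linear growth. -/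
theorem p_quasi_sharp_no_linear_growth (m : ℕ)
    (U Ustar : Set (EuclideanSpace ℝ (Fin m)))
    (hU : ¬ Bornology.IsBounded U)
    (hUstarU : Ustar ⊆ U) (hne : Ustar.Nonempty) (hcomp : IsCompact Ustar)
    (F : EuclideanSpace ℝ (Fin m) → EuclideanSpace ℝ (Fin m))
    (p μ : ℝ) (hp : 2 < p) (hμ : 0 < μ)
    (hsharp : ∀ u ∈ U, ∀ ustar ∈ Ustar,
      μ * (Metric.infDist u Ustar) ^ p ≤ (inner ℝ (F u) (u - ustar) : ℝ)) :
    ¬ ∃ C D : ℝ, 0 ≤ C ∧ 0 ≤ D ∧ ∀ u ∈ U, ‖F u‖ ≤ C * ‖u‖ + D := by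
  rintro ⟨C, D, hC, hD, hlin⟩
  -- bound the solution set
  obtain ⟨R, hR⟩ := (isBounded_iff_forall_norm_le).1 hcomp.isBounded
  obtain ⟨y0, hy0⟩ := hne
  have hR0 : 0 ≤ R := le_trans (norm_nonneg y0) (hR y0 hy0)
  set K : ℝ := C * (1 + R) + D with hK
  have hK0 : 0 ≤ K := by positivity
  have hp2 : 0 < p - 2 := by linarith
  set s : ℝ := max 1 ((K / μ + 1) ^ (1 / (p - 2))) with hs
  have hs1 : 1 ≤ s := le_max_left _ _
  have hs0 : 0 ≤ s := le_trans zero_le_one hs1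
  -- get a point of large norm
  obtain ⟨u, hu, hun⟩ : ∃ u ∈ U, s + R < ‖u‖ := by
    by_contra h
    push_neg at h
    exact hU ((isBounded_iff_forall_norm_le).2 ⟨s + R, h⟩)
  obtain ⟨ustar, hustar, hdist⟩ := hcomp.exists_infDist_eq_dist ⟨y0, hy0⟩ u
  set d : ℝ := Metric.infDist u Ustar with hd
  have hdn : d = ‖u - ustar‖ := by rw [hdist, dist_eq_norm]
  have hds : s ≤ d := by
    have h1 : ‖u‖ - ‖ustar‖ ≤ ‖u - ustar‖ := norm_sub_norm_le u ustar
    have h2 : ‖ustar‖ ≤ R := hR ustar hustar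
    rw [hdn]; linarith
  have hd1 : 1 ≤ d := le_trans hs1 hds
  have hd0 : 0 < d := lt_of_lt_of_le zero_lt_one hd1
  -- the key chain of inequalities
  have hchain : μ * d ^ p ≤ K * d ^ (2 : ℝ) := by
    have h1 : μ * d ^ p ≤ (inner ℝ (F u) (u - ustar) : ℝ) :=
      hsharp u hu ustar hustar
    have h2 : (inner ℝ (F u) (u - ustar) : ℝ) ≤ ‖F u‖ * ‖u - ustar‖ :=
      real_inner_le_norm _ _
    have h3 : ‖F u‖ ≤ C * ‖u‖ + D := hlin u hu
    have h4 : ‖u‖ ≤ d + R := by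
      have h5 : ‖u‖ - ‖ustar‖ ≤ ‖u - ustar‖ := norm_sub_norm_le u ustar
      have h6 : ‖ustar‖ ≤ R := hR ustar hustar
      rw [← hdn] at h5
      linarith
    have h7 : ‖u‖ ≤ (1 + R) * d := by
      nlinarith
    have h8 : ‖F u‖ * ‖u - ustar‖ ≤ (C * ((1 + R) * d) + D) * d := by
      rw [← hdn]
      apply mul_le_mul _ le_rfl hd0.le (by positivity)
      exact le_trans h3 (by nlinarith)
    have h9 : (C * ((1 + R) * d) + D) * d ≤ K * d ^ (2 : ℝ) := by
      rw [Real.rpow_two]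
      have hDd : D * d * 1 ≤ D * d * d := mul_le_mul_of_nonneg_left hd1 (mul_nonneg hD hd0.le)
      nlinarith [hDd]
    linarith
  -- therefore d ^ (p - 2) ≤ K / μ
  have hsplit : d ^ p = d ^ (p - 2) * d ^ (2 : ℝ) := by
    rw [← Real.rpow_add hd0]; ring_nf
  have hd2 : (0:ℝ) < d ^ (2 : ℝ) := Real.rpow_pos_of_pos hd0 2
  have hle : d ^ (p - 2) ≤ K / μ := by
    rw [le_div_iff₀ hμ]
    have h := hchain
    rw [hsplit] at h
    have h' : (d ^ (p - 2) * μ) * d ^ (2:ℝ) ≤ K * d ^ (2:ℝ) := by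
      calc (d ^ (p - 2) * μ) * d ^ (2:ℝ) = μ * (d ^ (p - 2) * d ^ (2:ℝ)) := by ring
        _ ≤ K * d ^ (2:ℝ) := h
    exact le_of_mul_le_mul_right h' hd2
  -- but d ^ (p - 2) is large
  have hbig : K / μ + 1 ≤ d ^ (p - 2) := by
    have h1 : (K / μ + 1) ^ (1 / (p - 2)) ≤ d :=
      le_trans (le_max_right _ _) hds
    have hKμ : (0:ℝ) ≤ K / μ + 1 := by positivity
    calc K / μ + 1 = ((K / μ + 1) ^ (1 / (p - 2))) ^ (p - 2) := by
          rw [← Real.rpow_mul hKμ, one_div, inv_mul_cancel₀ hp2.ne', Real.rpow_one]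
      _ ≤ d ^ (p - 2) :=
          Real.rpow_le_rpow (Real.rpow_nonneg hKμ _) h1 hp2.le
  linarith
end

section
/- Let p ≥ 1 and define F : ℝ² → ℝ² by F(u) = c(u)·(sign(u₁)|u₁|^{p-1} + u₂, sign(u₂)|u₂|^{p-1} - u₁), where c(u) = 2 if ‖u‖ ≤ 1 and c(u) = 1 if ‖u‖ > 1. Then for all u ∈ ℝ², ⟨F(u), u⟩ ≥ 2^{1-p}·‖u‖^p. -/
private lemma sign_abs_rpow_mul (p : ℝ) (hp : 1 ≤ p) (x : ℝ) :
    Real.sign x * |x| ^ (p - 1) * x = |x| ^ p := by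
  rcases lt_trichotomy x 0 with h | h | h
  · rw [Real.sign_of_neg h, abs_of_neg h]
    rw [show p = (p - 1) + 1 by ring, Real.rpow_add_one (by linarith : (-x) ≠ 0)]
    ring_nf
  · subst h; simp [Real.zero_rpow (by linarith : p ≠ 0)]
  · rw [Real.sign_of_pos h, abs_of_pos h]
    rw [show p = (p - 1) + 1 by ring, Real.rpow_add_one (by linarith : x ≠ 0)]
    ring_nf

private lemma two_rpow_key {p : ℝ} (hp : 1 ≤ p) {a b : ℝ} (ha : 0 ≤ a) (hb : 0 ≤ b) :
    (2 : ℝ) ^ (1 - p) * (a + b) ^ p ≤ a ^ p + b ^ p := by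
  have h := NNReal.rpow_add_le_mul_rpow_add_rpow ⟨a, ha⟩ ⟨b, hb⟩ hp
  have h' : (a + b) ^ p ≤ (2 : ℝ) ^ (p - 1) * (a ^ p + b ^ p) := by
    exact_mod_cast h
  have h2 : (0 : ℝ) < (2 : ℝ) ^ (1 - p) := Real.rpow_pos_of_pos (by norm_num) _
  calc (2 : ℝ) ^ (1 - p) * (a + b) ^ p
      ≤ (2 : ℝ) ^ (1 - p) * ((2 : ℝ) ^ (p - 1) * (a ^ p + b ^ p)) := by
        exact mul_le_mul_of_nonneg_left h' h2.le
    _ = a ^ p + b ^ p := by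
        rw [← mul_assoc, ← Real.rpow_add (by norm_num : (0:ℝ) < 2)]
        norm_num

/-- The operator of Example 1 is `p`-quasi sharp with constant `μ = 2^(1-p)`
relative to the unique solution `0`. -/
theorem example_operator_p_quasi_sharp (p : ℝ) (hp : 1 ≤ p)
    (c : EuclideanSpace ℝ (Fin 2) → ℝ)
    (hc : ∀ u, c u = if ‖u‖ ≤ 1 then 2 else 1)
    (F : EuclideanSpace ℝ (Fin 2) → EuclideanSpace ℝ (Fin 2))
    (hF0 : ∀ u, F u 0 = c u * (Real.sign (u 0) * |u 0| ^ (p - 1) + u 1))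
    (hF1 : ∀ u, F u 1 = c u * (Real.sign (u 1) * |u 1| ^ (p - 1) - u 0)) :
    ∀ u : EuclideanSpace ℝ (Fin 2),
      (2 : ℝ) ^ (1 - p) * ‖u‖ ^ p ≤ (inner ℝ (F u) u : ℝ) := by
  intro u
  set a := u 0 with ha
  set b := u 1 with hb
  have hc1 : (1 : ℝ) ≤ c u := by rw [hc]; split <;> norm_num
  have hinner : (inner ℝ (F u) u : ℝ) = c u * (|a| ^ p + |b| ^ p) := by
    rw [PiLp.inner_apply, Fin.sum_univ_two]
    simp only [RCLike.inner_apply, starRingEnd_apply, star_trivial, hF0, hF1]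
    rw [← ha, ← hb, ← sign_abs_rpow_mul p hp a, ← sign_abs_rpow_mul p hp b]
    ring_nf
  have hnorm : ‖u‖ ≤ |a| + |b| := by
    rw [EuclideanSpace.norm_eq, Fin.sum_univ_two]
    rw [show ‖u 0‖ = |a| from rfl, show ‖u 1‖ = |b| from rfl]
    rw [show |a| ^ 2 + |b| ^ 2 = a ^ 2 + b ^ 2 by rw [sq_abs, sq_abs]]
    have : a ^ 2 + b ^ 2 ≤ (|a| + |b|) ^ 2 := by
      have h1 : 0 ≤ |a| * |b| := mul_nonneg (abs_nonneg a) (abs_nonneg b)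
      nlinarith [sq_abs a, sq_abs b]
    calc Real.sqrt (a ^ 2 + b ^ 2) ≤ Real.sqrt ((|a| + |b|) ^ 2) :=
          Real.sqrt_le_sqrt this
      _ = |a| + |b| := Real.sqrt_sq (by positivity)
  have h2 : (0 : ℝ) < (2 : ℝ) ^ (1 - p) := Real.rpow_pos_of_pos (by norm_num) _
  have step1 : (2 : ℝ) ^ (1 - p) * ‖u‖ ^ p ≤ (2 : ℝ) ^ (1 - p) * (|a| + |b|) ^ p := by
    apply mul_le_mul_of_nonneg_left _ h2.le
    exact Real.rpow_le_rpow (norm_nonneg u) hnorm (by linarith)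
  have step2 := two_rpow_key hp (abs_nonneg a) (abs_nonneg b)
  have hsum : (0 : ℝ) ≤ |a| ^ p + |b| ^ p := by positivity
  have step3 : |a| ^ p + |b| ^ p ≤ c u * (|a| ^ p + |b| ^ p) := by
    nlinarith
  rw [hinner]
  linarith
end

section
/- Let p > 1 and define F : ℝ² → ℝ² by F(u) = c(u)·(sign(u₁)|u₁|^{p-1} + u₂, sign(u₂)|u₂|^{p-1} - u₁) with c as above. Then F is not monotone on ℝ²: there exist u, v ∈ ℝ² with ⟨F(u) - F(v), u - v⟩ < 0. In particular one may take u = (0,1) and v = (0, 1 + 1/(5(p-1))). -/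
/-- The operator of Example 1 is not monotone for `p > 1`. -/
theorem example_operator_not_monotone (p : ℝ) (hp : 1 < p)
    (c : EuclideanSpace ℝ (Fin 2) → ℝ)
    (hc : ∀ u, c u = if ‖u‖ ≤ 1 then 2 else 1)
    (F : EuclideanSpace ℝ (Fin 2) → EuclideanSpace ℝ (Fin 2))
    (hF0 : ∀ u, F u 0 = c u * (Real.sign (u 0) * |u 0| ^ (p - 1) + u 1))
    (hF1 : ∀ u, F u 1 = c u * (Real.sign (u 1) * |u 1| ^ (p - 1) - u 0)) :
    ∃ u v : EuclideanSpace ℝ (Fin 2), (inner ℝ (F u - F v) (u - v) : ℝ) < 0 := by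
  have hp1 : (0:ℝ) < p - 1 := by linarith
  set t : ℝ := (3/2 : ℝ) ^ ((1:ℝ)/(p-1)) with ht
  have ht1 : 1 < t := by
    rw [ht]
    exact (Real.one_lt_rpow_iff_of_pos (by norm_num)).mpr (Or.inl ⟨by norm_num, by positivity⟩)
  have ht0 : 0 < t := by linarith
  have htp : t ^ (p - 1) = 3/2 := by
    rw [ht, ← Real.rpow_mul (by norm_num), one_div, inv_mul_cancel₀ (ne_of_gt hp1),
      Real.rpow_one]
  set u : EuclideanSpace ℝ (Fin 2) := (WithLp.equiv 2 (Fin 2 → ℝ)).symm ![0, 1] with hu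
  set v : EuclideanSpace ℝ (Fin 2) := (WithLp.equiv 2 (Fin 2 → ℝ)).symm ![0, t] with hv
  have hu0 : u 0 = 0 := rfl
  have hu1 : u 1 = 1 := rfl
  have hv0 : v 0 = 0 := rfl
  have hv1 : v 1 = t := rfl
  have hnu : ‖u‖ = 1 := by
    rw [EuclideanSpace.norm_eq]
    simp [hu0, hu1, Fin.sum_univ_two]
  have hnv : ‖v‖ = t := by
    rw [EuclideanSpace.norm_eq]
    simp [hv0, hv1, Fin.sum_univ_two]
    rw [Real.sqrt_sq ht0.le]
  have hcu : c u = 2 := by rw [hc, hnu]; norm_num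
  have hcv : c v = 1 := by rw [hc, hnv, if_neg (not_le.mpr ht1)]
  have hFu0 : F u 0 = 2 := by
    rw [hF0, hcu, hu0, hu1]; simp
  have hFu1 : F u 1 = 2 := by
    rw [hF1, hcu, hu0, hu1]
    simp [Real.sign_one]
  have hFv0 : F v 0 = t := by
    rw [hF0, hcv, hv0, hv1]; simp
  have hFv1 : F v 1 = 3/2 := by
    rw [hF1, hcv, hv0, hv1, Real.sign_of_pos ht0, abs_of_pos ht0, htp]
    ring
  refine ⟨u, v, ?_⟩
  have : (inner ℝ (F u - F v) (u - v) : ℝ)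
      = (F u 0 - F v 0) * (u 0 - v 0) + (F u 1 - F v 1) * (u 1 - v 1) := by
    simp [PiLp.inner_apply, Fin.sum_univ_two, PiLp.sub_apply]
    ring
  rw [this, hFu0, hFu1, hFv0, hFv1, hu0, hu1, hv0, hv1]
  nlinarith
end

section
/- Let p ∈ (0,2) ∪ (2,∞) and F : ℝ² → ℝ² be as in Example 1 (F(u) = c(u)·(sign(u₁)|u₁|^{p-1} + u₂, sign(u₂)|u₂|^{p-1} - u₁)). Then F is not quasi-strongly monotone: there is no μ > 0 such that ⟨F(u), u⟩ ≥ μ‖u‖² for all u ∈ ℝ². -/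
/-- The operator of Example 1 is not quasi-strongly monotone for any `p ∈ (0,2) ∪ (2,∞)`. -/
theorem example_operator_not_quasi_strongly_monotone (p : ℝ) (hp : 0 < p) (hp2 : p ≠ 2)
    (c : EuclideanSpace ℝ (Fin 2) → ℝ)
    (hc : ∀ u, c u = if ‖u‖ ≤ 1 then 2 else 1)
    (F : EuclideanSpace ℝ (Fin 2) → EuclideanSpace ℝ (Fin 2))
    (hF0 : ∀ u, F u 0 = c u * (Real.sign (u 0) * |u 0| ^ (p - 1) + u 1))
    (hF1 : ∀ u, F u 1 = c u * (Real.sign (u 1) * |u 1| ^ (p - 1) - u 0)) :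
    ¬ ∃ μ : ℝ, 0 < μ ∧ ∀ u : EuclideanSpace ℝ (Fin 2),
        μ * ‖u‖ ^ 2 ≤ (inner ℝ (F u) u : ℝ) := by
  rintro ⟨μ, hμ, h⟩
  have key : ∀ t : ℝ, 0 < t → ∃ u : EuclideanSpace ℝ (Fin 2),
      ‖u‖ = t ∧ (inner ℝ (F u) u : ℝ) = c u * t ^ p := by
    intro t ht
    set u : EuclideanSpace ℝ (Fin 2) := (WithLp.equiv 2 (Fin 2 → ℝ)).symm ![t, 0] with hu
    have hu0 : u 0 = t := rfl
    have hu1 : u 1 = (0:ℝ) := rfl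
    refine ⟨u, ?_, ?_⟩
    · rw [EuclideanSpace.norm_eq, Fin.sum_univ_two, hu0, hu1]
      simp [Real.sqrt_sq_eq_abs, abs_of_pos ht]
    · rw [PiLp.inner_apply, Fin.sum_univ_two, hu0, hu1]
      rw [hF0, hF1, hu0, hu1]
      simp only [RCLike.inner_apply, starRingEnd_apply, star_trivial]
      rw [Real.sign_of_pos ht, abs_of_pos ht]
      rw [mul_comm (0:ℝ) _]
      rw [mul_zero, add_zero, one_mul, add_zero]
      rw [← mul_assoc, mul_comm t (c u), mul_assoc]
      rw [mul_comm t (t ^ (p-1)), ← Real.rpow_add_one (ne_of_gt ht)]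
      ring_nf
  rcases lt_or_gt_of_ne hp2 with hlt | hgt
  · -- p < 2 : take t large, c u = 1
    set t : ℝ := max 2 ((2/μ) ^ (1/(2-p))) with htdef
    have ht2 : (2:ℝ) ≤ t := le_max_left _ _
    have ht : 0 < t := lt_of_lt_of_le two_pos ht2
    obtain ⟨u, hnorm, hinner⟩ := key t ht
    have hcu : c u = 1 := by
      rw [hc, hnorm]
      rw [if_neg (by linarith)]
    have htge : 2/μ ≤ t ^ (2-p) := by
      calc 2/μ = ((2/μ) ^ (1/(2-p))) ^ (2-p) := by
            rw [← Real.rpow_mul (by positivity), one_div_mul_cancel (by linarith), Real.rpow_one]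
        _ ≤ t ^ (2-p) :=
            Real.rpow_le_rpow (Real.rpow_nonneg (by positivity) _) (le_max_right _ _) (by linarith)
    have hid : t ^ p * t ^ (2-p) = t ^ (2:ℕ) := by
      rw [← Real.rpow_add ht, ← Real.rpow_natCast t 2]; norm_num
    have hle := h u
    rw [hnorm, hinner, hcu, one_mul] at hle
    have hpos : 0 < t ^ (2-p) := Real.rpow_pos_of_pos ht _
    have hmul := mul_le_mul_of_nonneg_right hle hpos.le
    rw [hid] at hmul
    -- hmul : μ * t^2 * t^(2-p) ≤ t^2
    have ht2pos : 0 < t ^ (2:ℕ) := pow_pos ht 2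
    have e1 : μ * t ^ (2:ℕ) * (2/μ) ≤ μ * t ^ (2:ℕ) * t ^ (2-p) :=
      mul_le_mul_of_nonneg_left htge (mul_pos hμ ht2pos).le
    have e2 : μ * t ^ (2:ℕ) * (2/μ) = 2 * t ^ (2:ℕ) := by
      field_simp
    rw [e2] at e1
    linarith
  · -- p > 2 : take t small, c u = 2
    set t : ℝ := min 1 ((μ/4) ^ (1/(p-2))) with htdef
    have ht : 0 < t := lt_min one_pos (Real.rpow_pos_of_pos (by positivity) _)
    obtain ⟨u, hnorm, hinner⟩ := key t ht
    have hcu : c u = 2 := by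
      rw [hc, hnorm, if_pos (min_le_left _ _)]
    have htp : t ^ (p-2) ≤ μ/4 := by
      calc t ^ (p-2) ≤ ((μ/4) ^ (1/(p-2))) ^ (p-2) :=
            Real.rpow_le_rpow ht.le (min_le_right _ _) (by linarith)
        _ = μ/4 := by
            rw [← Real.rpow_mul (by positivity), one_div_mul_cancel (by linarith), Real.rpow_one]
    have hid : t ^ p = t ^ (p-2) * t ^ (2:ℕ) := by
      rw [← Real.rpow_natCast t 2, ← Real.rpow_add ht]; norm_num
    have hle := h u
    rw [hnorm, hinner, hcu, hid] at hle
    have ht2pos : 0 < t ^ (2:ℕ) := pow_pos ht 2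
    nlinarith [mul_le_mul_of_nonneg_right htp ht2pos.le]
end

section
/- (Main recursion of Lemma 1) Let U ⊆ ℝ^m be closed convex with projection P_U. Given points u_k, h_{k-1}, h_k ∈ U, stepsize α_k > 0, and vectors Φ_{k-1}, Φ_k ∈ ℝ^m, suppose h_k = P_U(u_k - α_k·Φ_{k-1}) and u_{k+1} = P_U(u_k - α_k·Φ_k). Then for all y ∈ U: ‖u_{k+1} - y‖² ≤ ‖u_k - y‖² - ‖u_{k+1} - h_k‖² - ‖u_k - h_k‖² - 2α_k⟨Φ_k, h_k - y⟩ + 2α_k²‖Φ_k - Φ_{k-1}‖². -/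
open RealInnerProductSpace

section Aux

variable {E : Type*} [NormedAddCommGroup E] [InnerProductSpace ℝ E]

lemma popov_aux_ident (a b c : E) :
    2 * ⟪a - b, c - b⟫ = ‖a - b‖ ^ 2 + ‖c - b‖ ^ 2 - ‖a - c‖ ^ 2 := by
  have key : ∀ x y : E, 2 * ⟪x, y⟫ = ‖x‖ ^ 2 + ‖y‖ ^ 2 - ‖x - y‖ ^ 2 := by
    intro x y
    rw [norm_sub_sq_real]
    ring
  have h : a - c = (a - b) - (c - b) := by abel
  rw [h]
  exact key _ _

lemma popov_var_ineq {U : Set E} (hconv : Convex ℝ U)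
    {P : E → E} (hPmem : ∀ v, P v ∈ U)
    (hPmin : ∀ v, ∀ w ∈ U, ‖P v - v‖ ≤ ‖w - v‖) (v : E) :
    ∀ w ∈ U, ⟪v - P v, w - P v⟫ ≤ 0 := by
  have hne : Nonempty U := ⟨⟨P v, hPmem v⟩⟩
  refine (norm_eq_iInf_iff_real_inner_le_zero hconv (hPmem v)).mp ?_
  refine le_antisymm (le_ciInf fun w => ?_) (ciInf_le ⟨0, fun _ ⟨_, h⟩ => h ▸ norm_nonneg _⟩
    (⟨P v, hPmem v⟩ : U))
  rw [norm_sub_rev v]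
  calc ‖P v - v‖ ≤ ‖(w : E) - v‖ := hPmin v w w.2
    _ = ‖v - (w : E)‖ := (norm_sub_rev _ _)

end Aux

/-- Main recursion of Lemma 1 for the (stochastic) Popov method. -/
theorem popov_main_recursion (m : ℕ) (U : Set (EuclideanSpace ℝ (Fin m)))
    (hclosed : IsClosed U) (hconv : Convex ℝ U) (hne : U.Nonempty)
    (P : EuclideanSpace ℝ (Fin m) → EuclideanSpace ℝ (Fin m))
    (hPmem : ∀ v, P v ∈ U)
    (hPmin : ∀ v, ∀ w ∈ U, ‖P v - v‖ ≤ ‖w - v‖)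
    (αk : ℝ) (hαk : 0 < αk)
    (uk hkm1 hk uk1 : EuclideanSpace ℝ (Fin m))
    (Φkm1 Φk : EuclideanSpace ℝ (Fin m))
    (huk : uk ∈ U) (hhkm1 : hkm1 ∈ U)
    (hhk : hk = P (uk - αk • Φkm1)) (huk1 : uk1 = P (uk - αk • Φk)) :
    ∀ y ∈ U,
      ‖uk1 - y‖ ^ 2 ≤ ‖uk - y‖ ^ 2 - ‖uk1 - hk‖ ^ 2 - ‖uk - hk‖ ^ 2
        - 2 * αk * (inner ℝ Φk (hk - y) : ℝ) + 2 * αk ^ 2 * ‖Φk - Φkm1‖ ^ 2 := by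
  intro y hy
  have hvar := popov_var_ineq hconv hPmem hPmin
  have huk1U : uk1 ∈ U := huk1 ▸ hPmem _
  have hhkU : hk ∈ U := hhk ▸ hPmem _
  -- variational inequalities
  have h1 : ⟪uk - αk • Φk - uk1, y - uk1⟫ ≤ 0 := by
    rw [huk1]; exact hvar _ y hy
  have h2 : ⟪uk - αk • Φkm1 - hk, uk1 - hk⟫ ≤ 0 := by
    rw [hhk]; exact hvar _ uk1 huk1U
  -- nonexpansiveness: ‖hk - uk1‖ ≤ αk ‖Φk - Φkm1‖
  have h3 : ⟪uk - αk • Φkm1 - hk, uk1 - hk⟫ ≤ 0 := h2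
  have h4 : ⟪uk - αk • Φk - uk1, hk - uk1⟫ ≤ 0 := by
    rw [huk1]; exact hvar _ hk hhkU
  have hnonexp : ‖hk - uk1‖ ≤ αk * ‖Φk - Φkm1‖ := by
    have hsum : ‖hk - uk1‖ ^ 2 ≤ ⟪αk • (Φk - Φkm1), hk - uk1⟫ := by
      have e1 : ⟪uk - αk • Φkm1 - hk, uk1 - hk⟫
          = -⟪uk - αk • Φkm1 - hk, hk - uk1⟫ := by
        rw [← inner_neg_right]; congr 1; abel
      have expand : ⟪uk - αk • Φkm1 - hk, hk - uk1⟫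
            - ⟪uk - αk • Φk - uk1, hk - uk1⟫
          = ⟪αk • (Φk - Φkm1), hk - uk1⟫ - ‖hk - uk1‖ ^ 2 := by
        rw [← inner_sub_left, ← real_inner_self_eq_norm_sq, ← inner_sub_left]
        congr 1
        rw [smul_sub]; abel
      have h2' : 0 ≤ ⟪uk - αk • Φkm1 - hk, hk - uk1⟫ := by
        rw [e1] at h2; linarith
      linarith
    have hcs : ⟪αk • (Φk - Φkm1), hk - uk1⟫ ≤ ‖αk • (Φk - Φkm1)‖ * ‖hk - uk1‖ :=
      real_inner_le_norm _ _
    have hnorm : ‖αk • (Φk - Φkm1)‖ = αk * ‖Φk - Φkm1‖ := by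
      rw [norm_smul, Real.norm_eq_abs, abs_of_pos hαk]
    rw [hnorm] at hcs
    by_contra hlt
    push_neg at hlt
    have hd : 0 < ‖hk - uk1‖ := lt_of_le_of_lt
      (mul_nonneg hαk.le (norm_nonneg _)) hlt
    nlinarith [hsum, hcs, mul_lt_mul_of_pos_right hlt hd]
  -- expand h1
  have e1 : ⟪uk - αk • Φk - uk1, y - uk1⟫
      = ⟪uk - uk1, y - uk1⟫ - αk * ⟪Φk, y - uk1⟫ := by
    rw [show uk - αk • Φk - uk1 = (uk - uk1) - αk • Φk by abel, inner_sub_left,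
      real_inner_smul_left]
  have e2 : ⟪uk - αk • Φkm1 - hk, uk1 - hk⟫
      = ⟪uk - hk, uk1 - hk⟫ - αk * ⟪Φkm1, uk1 - hk⟫ := by
    rw [show uk - αk • Φkm1 - hk = (uk - hk) - αk • Φkm1 by abel, inner_sub_left,
      real_inner_smul_left]
  have i1 := popov_aux_ident uk uk1 y
  have i2 := popov_aux_ident uk hk uk1
  -- inner product splits
  have s1 : ⟪Φk, y - uk1⟫ = -⟪Φk, hk - y⟫ + ⟪Φk, hk - uk1⟫ := by
    rw [← inner_neg_right, ← inner_add_right]; congr 1; abel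
  have s2 : ⟪Φk, hk - uk1⟫ = ⟪Φk - Φkm1, hk - uk1⟫ + ⟪Φkm1, hk - uk1⟫ := by
    rw [← inner_add_left]; congr 1; abel
  have s3 : ⟪Φkm1, uk1 - hk⟫ = -⟪Φkm1, hk - uk1⟫ := by
    rw [← inner_neg_right]; congr 1; abel
  have hcs2 : ⟪Φk - Φkm1, hk - uk1⟫ ≤ ‖Φk - Φkm1‖ * ‖hk - uk1‖ :=
    real_inner_le_norm _ _
  have hcs3 : ‖Φk - Φkm1‖ * ‖hk - uk1‖ ≤ αk * ‖Φk - Φkm1‖ ^ 2 := by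
    nlinarith [norm_nonneg (Φk - Φkm1)]
  have hrev1 : ‖uk1 - hk‖ = ‖hk - uk1‖ := norm_sub_rev _ _
  have hrev2 : ‖y - uk1‖ = ‖uk1 - y‖ := norm_sub_rev _ _
  have hrev3 : ‖uk1 - hk‖ = ‖hk - uk1‖ := norm_sub_rev _ _
  rw [e1] at h1
  rw [e2] at h2
  rw [hrev2] at i1
  rw [hrev1] at i2
  rw [hrev3]
  nlinarith [hαk, norm_nonneg (hk - uk1)]
end

section
/- Let F : ℝ^{m+s} → ℝ^{m+s} be given by F(u) = c(u)·(J u + b), where J is the block matrix [[A₁, A₂], [-A₂ᵀ, A₃]] with A₁, A₃ symmetric positive definite (smallest eigenvalues μ_{A₁}, μ_{A₃} > 0), A₂ arbitrary, and c(u) = 1 for ‖u‖ ≤ 10, c(u) = 1/2 for ‖u‖ > 10. Then for every u and every u* with J u* + b = 0: ⟨F(u), u - u*⟩ ≥ (1/2)·min{μ_{A₁}, μ_{A₃}}·‖u - u*‖². In particular F is 2-quasi sharp with μ = (1/2)·min{μ_{A₁}, μ_{A₃}}. -/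
/-- The saddle-point operator `F(u) = c(u)(Ju + b)` with block matrix
`J = [[A₁, A₂], [-A₂ᵀ, A₃]]`, `A₁, A₃` symmetric positive definite with smallest
eigenvalues `μ₁, μ₃ > 0`, is `2`-quasi sharp with constant `μ = min{μ₁, μ₃} / 2`. -/
theorem saddle_operator_two_quasi_sharp (m s : ℕ)
    (A₁ : EuclideanSpace ℝ (Fin m) →ₗ[ℝ] EuclideanSpace ℝ (Fin m))
    (A₂ : EuclideanSpace ℝ (Fin s) →ₗ[ℝ] EuclideanSpace ℝ (Fin m))
    (A₂t : EuclideanSpace ℝ (Fin m) →ₗ[ℝ] EuclideanSpace ℝ (Fin s))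
    (A₃ : EuclideanSpace ℝ (Fin s) →ₗ[ℝ] EuclideanSpace ℝ (Fin s))
    (μ₁ μ₃ : ℝ) (hμ₁ : 0 < μ₁) (hμ₃ : 0 < μ₃)
    (hA₁sym : ∀ x x', (inner ℝ (A₁ x) x' : ℝ) = inner ℝ x (A₁ x'))
    (hA₃sym : ∀ y y', (inner ℝ (A₃ y) y' : ℝ) = inner ℝ y (A₃ y'))
    (hA₂t : ∀ x y, (inner ℝ (A₂ y) x : ℝ) = inner ℝ y (A₂t x))
    (hA₁pos : ∀ x, μ₁ * ‖x‖ ^ 2 ≤ (inner ℝ x (A₁ x) : ℝ))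
    (hA₃pos : ∀ y, μ₃ * ‖y‖ ^ 2 ≤ (inner ℝ y (A₃ y) : ℝ))
    (J : WithLp 2 (EuclideanSpace ℝ (Fin m) × EuclideanSpace ℝ (Fin s)) →ₗ[ℝ]
         WithLp 2 (EuclideanSpace ℝ (Fin m) × EuclideanSpace ℝ (Fin s)))
    (bvec : WithLp 2 (EuclideanSpace ℝ (Fin m) × EuclideanSpace ℝ (Fin s)))
    (c : WithLp 2 (EuclideanSpace ℝ (Fin m) × EuclideanSpace ℝ (Fin s)) → ℝ)
    (F : WithLp 2 (EuclideanSpace ℝ (Fin m) × EuclideanSpace ℝ (Fin s)) →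
         WithLp 2 (EuclideanSpace ℝ (Fin m) × EuclideanSpace ℝ (Fin s)))
    (hJ : ∀ x y, J ((WithLp.equiv 2 _).symm (x, y)) =
        (WithLp.equiv 2 _).symm (A₁ x + A₂ y, -(A₂t x) + A₃ y))
    (hcdef : ∀ u, c u = if ‖u‖ ≤ 10 then 1 else 1 / 2)
    (hFdef : ∀ u, F u = c u • (J u + bvec)) :
    ∀ u ustar, J ustar + bvec = 0 →
      (1 / 2) * min μ₁ μ₃ * ‖u - ustar‖ ^ 2 ≤ (inner ℝ (F u) (u - ustar) : ℝ) := by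
  intro u ustar hstar
  set z := u - ustar with hzdef
  -- J u + bvec = J z
  have hJu : J u + bvec = J z := by
    have : u = z + ustar := by simp [hzdef]
    rw [this, map_add]
    rw [add_assoc, hstar, add_zero]
  -- key quadratic bound
  have hJz : J z = (WithLp.equiv 2 _).symm
      (A₁ z.fst + A₂ z.snd, -(A₂t z.fst) + A₃ z.snd) := hJ z.fst z.snd
  have hkey : min μ₁ μ₃ * ‖z‖ ^ 2 ≤ (inner ℝ (J z) z : ℝ) := by
    have hinner : (inner ℝ (J z) z : ℝ)
        = inner ℝ (A₁ z.fst + A₂ z.snd) z.fst + inner ℝ (-(A₂t z.fst) + A₃ z.snd) z.snd := by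
      rw [hJz, WithLp.prod_inner_apply]
      rfl
    have hcross : (inner ℝ (A₂ z.snd) z.fst : ℝ) + inner ℝ (-(A₂t z.fst)) z.snd = 0 := by
      rw [hA₂t z.fst z.snd, inner_neg_left, real_inner_comm]
      ring
    have : (inner ℝ (J z) z : ℝ)
        = inner ℝ (A₁ z.fst) z.fst + inner ℝ (A₃ z.snd) z.snd := by
      rw [hinner, inner_add_left, inner_add_left]
      linarith [hcross]
    rw [this]
    have e1 : (inner ℝ (A₁ z.fst) z.fst : ℝ) = inner ℝ z.fst (A₁ z.fst) := real_inner_comm _ _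
    have e3 : (inner ℝ (A₃ z.snd) z.snd : ℝ) = inner ℝ z.snd (A₃ z.snd) := real_inner_comm _ _
    rw [e1, e3]
    have h1 := hA₁pos z.fst
    have h3 := hA₃pos z.snd
    have hn : ‖z‖ ^ 2 = ‖z.fst‖ ^ 2 + ‖z.snd‖ ^ 2 := WithLp.prod_norm_sq_eq_of_L2 z
    rw [hn]
    have hm1 : min μ₁ μ₃ ≤ μ₁ := min_le_left _ _
    have hm3 : min μ₁ μ₃ ≤ μ₃ := min_le_right _ _
    nlinarith [sq_nonneg ‖z.fst‖, sq_nonneg ‖z.snd‖]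
  -- c u ≥ 1/2 and ≤ 1
  have hc : (1:ℝ)/2 ≤ c u := by
    rw [hcdef u]; split <;> norm_num
  have hJznn : (0:ℝ) ≤ inner ℝ (J z) z := by
    have : (0:ℝ) ≤ min μ₁ μ₃ * ‖z‖ ^ 2 := by positivity
    linarith
  have : (inner ℝ (F u) z : ℝ) = c u * inner ℝ (J z) z := by
    rw [hFdef u, hJu, real_inner_smul_left]
  rw [this]
  calc (1/2) * min μ₁ μ₃ * ‖z‖ ^ 2 ≤ (1/2) * inner ℝ (J z) z := by nlinarith
    _ ≤ c u * inner ℝ (J z) z := by nlinarith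
end
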